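/- Suppose b = b_k,…,b_0 is a colour witness for ρ, d = φ(v_{m+1}) is even, and there is no index j' such that b_{j'} ≠ ⊥, b_{j'} < d, and b_{j'} is odd. Suppose j is the maximal index such that: for all i > j, b_i is an even number, b_i = ⊥, or b_i > d; either b_j = ⊥, or b_j > d and b_j is odd; and for all i < j, b_i is an even number. Define c by: for all i > j, c_i = b_i if b_i = ⊥ or b_i > d, and c_i = d if b_i is a number ≤ d (and thus even); c_j = d; and c_i = ⊥ for all i < j. Then c is a colour witness for ρ' = v_1,…,v_m,v_{m+1}. -/

import Mathlib

open scoped Classical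

/-- Membership in `C⁻`, where `C = {lo,…,hi}`: everything of `C` except `hi` when `hi` is odd. -/
def CminusMem (lo hi c : ℕ) : Prop := lo ≤ c ∧ c ≤ hi ∧ (Even hi ∨ c ≠ hi)

/-- The index of the first position of an `i`-colour-witness: `1` if the colour `i` is even
and `0` if it is odd. -/
def startIdx (i : ℕ) : ℕ := if Even i then 1 else 0

variable {V : Type*}

/-- `p`, on indices `startIdx i, …, len`, is an `i`-colour-witness of length `len` for the
play prefix `v_1,…,v_m`: strictly increasing positions, all but the final one of even colour,
the final one of colour `i`, with inner domination and outer domination by `i`. -/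
def IsCWit (φ : V → ℕ) (v : ℕ → V) (m i len : ℕ) (p : ℕ → ℕ) : Prop :=
  1 ≤ len ∧
  (∀ j, startIdx i ≤ j → j ≤ len → 1 ≤ p j ∧ p j ≤ m) ∧
  (∀ j, startIdx i ≤ j → j < len → p j < p (j + 1)) ∧
  (∀ j, startIdx i ≤ j → j < len → Even (φ (v (p j)))) ∧
  φ (v (p len)) = i ∧
  (∀ j, startIdx i ≤ j → j < len → ∀ t, p j ≤ t → t ≤ p (j + 1) →
      φ (v t) ≤ max (φ (v (p j))) (φ (v (p (j + 1))))) ∧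
  (∀ t, p len ≤ t → t ≤ m → φ (v t) ≤ i)

/-- The colour `c` occurs among the entries `b_0,…,b_k` of `b`. -/
def occursIn (k : ℕ) (b : ℕ → Option ℕ) (c : ℕ) : Prop := ∃ p ≤ k, b p = some c

/-- `unblk(i,b)`: the colours `j` occurring in `b` with `i ≤ j < odd(i,b)`, where `odd(i,b)`
is the least odd colour strictly greater than `i` occurring in `b` (`∞` if none). -/
noncomputable def unblkF (hi k : ℕ) (b : ℕ → Option ℕ) (i : ℕ) : Finset ℕ :=
  (Finset.range (hi + 1)).filter fun j =>
    occursIn k b j ∧ i ≤ j ∧ ∀ o, Odd o → i < o → o ≤ j → ¬ occursIn k b o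

/-- `ubp(i,b)`: the positions of `b` whose entry is a colour of `unblk(i,b)`. -/
noncomputable def ubpF (hi k : ℕ) (b : ℕ → Option ℕ) (i : ℕ) : Finset ℕ :=
  (Finset.range (k + 1)).filter fun p => ∃ c, b p = some c ∧ c ∈ unblkF hi k b i

/-- `b = b_k,…,b_0` is a colour witness for the play prefix `v_1,…,v_m`, for the colouring
`φ` into `C = {lo,…,hi}`. -/
def IsColourWitness (lo hi : ℕ) (φ : V → ℕ) (v : ℕ → V) (m k : ℕ)
    (b : ℕ → Option ℕ) : Prop :=
  (∀ p ≤ k, ∀ c, b p = some c → CminusMem lo hi c) ∧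
  -- order
  (∀ i j, j < i → i ≤ k → ∀ ci cj, b i = some ci → b j = some cj → cj ≤ ci) ∧
  -- conciseness
  (∀ o, Odd o → ∀ i j, i ≤ k → j ≤ k → i ≠ j → b i = some o → ¬ b j = some o) ∧
  (∀ c, b 0 = some c → ¬ Odd c) ∧
  -- the family of colour witnesses
  ∃ (ℓ : ℕ → ℕ) (P : ℕ → ℕ → ℕ),
    (∀ i, occursIn k b i → IsCWit φ v m i (ℓ i) (P i)) ∧
    -- ordered witnesses
    (∀ i j, occursIn k b i → occursIn k b j → j < i → P i (ℓ i) < P j (startIdx j)) ∧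
    -- length constraints
    (∀ i, CminusMem lo hi i → (∑ p ∈ ubpF hi k b i, 2 ^ p) ≤ ∑ j ∈ unblkF hi k b i, ℓ j)

/-- The three conditions characterising the update index `j` of the overflow rule for an even
colour `d`: all entries above `j` are even numbers, `⊥`, or `> d`; the entry at `j` is `⊥` or
an odd colour `> d`; and all entries below `j` are even numbers. -/
def OverflowIdx (k : ℕ) (b : ℕ → Option ℕ) (d j : ℕ) : Prop :=
  (∀ i, j < i → i ≤ k → b i = none ∨ ∃ c, b i = some c ∧ (Even c ∨ d < c)) ∧
  (b j = none ∨ ∃ c, b j = some c ∧ d < c ∧ Odd c) ∧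
  (∀ i < j, ∃ c, b i = some c ∧ Even c)

/-- inner-domination-with-increase relation between consecutive positions. -/
def innerOk (φ : V → ℕ) (v : ℕ → V) (a b : ℕ) : Prop :=
  a < b ∧ ∀ t, a ≤ t → t ≤ b → φ (v t) ≤ max (φ (v a)) (φ (v b))

lemma listToWit (φ : V → ℕ) (v : ℕ → V) (m d : ℕ) (hd : Even d) (W : List ℕ) (hne : W ≠ [])
    (ha : ∀ p ∈ W, 1 ≤ p ∧ p ≤ m + 1)
    (hchain : W.Chain' (innerOk φ v))
    (hev : ∀ p ∈ W.dropLast, Even (φ (v p)))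
    (hlast : φ (v (W.getLast hne)) = d)
    (houter : ∀ t, W.getLast hne ≤ t → t ≤ m + 1 → φ (v t) ≤ d) :
    IsCWit φ v (m + 1) d W.length (fun t => W.getD (t - 1) 0) := by
  have hlen : 1 ≤ W.length := List.length_pos_iff.2 hne
  have hstart : startIdx d = 1 := if_pos hd
  have hget : ∀ t, 1 ≤ t → t ≤ W.length → ∀ (h : t - 1 < W.length),
      W.getD (t - 1) 0 = W[t - 1] := fun t h1 h2 h => List.getD_eq_getElem W 0 h
  have hchain' := List.isChain_iff_getElem.1 hchain
  have hpair : ∀ i, i + 1 < W.length → innerOk φ v (W.getD i 0) (W.getD (i+1) 0) := by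
    intro i h
    rw [List.getD_eq_getElem W 0 (by omega), List.getD_eq_getElem W 0 h]
    have := hchain' i (by omega)
    simpa using this
  have hgl : W.getLast hne = W[W.length - 1] := List.getLast_eq_getElem hne
  refine ⟨hlen, ?_, ?_, ?_, ?_, ?_, ?_⟩
  · intro t h1 h2
    beta_reduce
    rw [hget t (by rw [hstart] at h1; omega) h2 (by omega)]
    exact ha _ (List.getElem_mem _)
  · intro t h1 h2
    rw [hstart] at h1
    beta_reduce
    rw [show t + 1 - 1 = (t - 1) + 1 from by omega]
    exact (hpair (t-1) (by omega)).1
  · intro t h1 h2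
    rw [hstart] at h1
    beta_reduce
    rw [hget t (by omega) (by omega) (by omega)]
    have hdl : W[t-1] ∈ W.dropLast := by
      have hh : t - 1 < W.dropLast.length := by
        rw [List.length_dropLast]; omega
      have := List.getElem_dropLast hh
      rw [← this]
      exact List.getElem_mem _
    exact hev _ hdl
  · beta_reduce
    rw [hget W.length (by omega) le_rfl (by omega), ← hgl]; exact hlast
  · intro t h1 h2 s hs1 hs2
    rw [hstart] at h1
    beta_reduce
    beta_reduce at hs1 hs2
    rw [show t + 1 - 1 = (t - 1) + 1 from by omega]
    rw [show t + 1 - 1 = (t - 1) + 1 from by omega] at hs2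
    exact (hpair (t-1) (by omega)).2 s hs1 hs2
  · intro t h1 h2
    beta_reduce at h1
    rw [hget W.length (by omega) le_rfl (by omega), ← hgl] at h1
    exact houter t h1 h2

lemma blockProps (φ : V → ℕ) (v : ℕ → V) (m x lx : ℕ) (Px : ℕ → ℕ)
    (hx : Even x) (hw : IsCWit φ v m x lx Px) :
    ((List.range lx).map fun t => Px (t + 1)).length = lx ∧
    (∀ p ∈ (List.range lx).map fun t => Px (t + 1), 1 ≤ p ∧ p ≤ m) ∧
    (∀ p ∈ (List.range lx).map fun t => Px (t + 1), Even (φ (v p))) ∧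
    ((List.range lx).map fun t => Px (t + 1)).Chain' (innerOk φ v) ∧
    ((List.range lx).map fun t => Px (t + 1)).getLast? = some (Px lx) ∧
    ((List.range lx).map fun t => Px (t + 1)).head? = some (Px 1) ∧
    (∀ t, Px lx ≤ t → t ≤ m → φ (v t) ≤ φ (v (Px lx))) := by
  obtain ⟨h1, h2, h3, h4, h5, h6, h7⟩ := hw
  rw [startIdx, if_pos hx] at h2 h3 h4 h6
  obtain ⟨n, rfl⟩ : ∃ n, lx = n + 1 := ⟨lx - 1, by omega⟩
  refine ⟨by simp, ?_, ?_, ?_, ?_, ?_, ?_⟩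
  · intro p hp
    obtain ⟨t, ht, rfl⟩ := List.mem_map.1 hp
    rw [List.mem_range] at ht
    exact h2 (t+1) (by omega) (by omega)
  · intro p hp
    obtain ⟨t, ht, rfl⟩ := List.mem_map.1 hp
    rw [List.mem_range] at ht
    rcases Nat.lt_or_ge (t+1) (n+1) with h | h
    · exact h4 (t+1) (by omega) h
    · have : t + 1 = n + 1 := by omega
      rw [this, h5]; exact hx
  · rw [List.Chain', List.isChain_iff_getElem]
    intro i hi
    simp only [List.get_eq_getElem, List.getElem_map, List.getElem_range]
    simp only [List.length_map, List.length_range] at hi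
    constructor
    · have := h3 (i+1) (by omega) (by omega)
      simpa using this
    · intro t ht1 ht2
      have := h6 (i+1) (by omega) (by omega) t (by simpa using ht1) (by simpa using ht2)
      simpa using this
  · rw [List.range_succ]
    simp
  · rw [List.range_succ_eq_map]
    simp
  · intro t ht1 ht2
    rw [h5]
    exact h7 t ht1 ht2

lemma chainProps (φ : V → ℕ) (v : ℕ → V) (m : ℕ) (ℓ : ℕ → ℕ) (P : ℕ → ℕ → ℕ) :
    ∀ L : List ℕ, L.Pairwise (· > ·) →
    (∀ x ∈ L, Even x) →
    (∀ x ∈ L, IsCWit φ v m x (ℓ x) (P x)) →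
    (∀ x ∈ L, ∀ y ∈ L, y < x → P x (ℓ x) < P y 1) →
    ((L.map fun x => (List.range (ℓ x)).map fun t => P x (t + 1)).flatten.length
        = (L.map ℓ).sum ∧
    (∀ p ∈ (L.map fun x => (List.range (ℓ x)).map fun t => P x (t + 1)).flatten,
        1 ≤ p ∧ p ≤ m) ∧
    (∀ p ∈ (L.map fun x => (List.range (ℓ x)).map fun t => P x (t + 1)).flatten,
        Even (φ (v p))) ∧
    (L.map fun x => (List.range (ℓ x)).map fun t => P x (t + 1)).flatten.Chain' (innerOk φ v) ∧
    (∀ p, (L.map fun x => (List.range (ℓ x)).map fun t => P x (t + 1)).flatten.getLast?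
        = some p → ∀ t, p ≤ t → t ≤ m → φ (v t) ≤ φ (v p)) ∧
    (∀ x, L.head? = some x →
      (L.map fun x => (List.range (ℓ x)).map fun t => P x (t + 1)).flatten.head?
        = some (P x 1))) := by
  intro L
  induction L with
  | nil => intro _ _ _ _; simp [List.Chain', List.isChain_nil]
  | cons x L' ih =>
    intro hs he hw ho
    rw [List.pairwise_cons] at hs
    obtain ⟨hxgt, hs'⟩ := hs
    have hxL : x ∈ x :: L' := List.mem_cons_self
    obtain ⟨ih1, ih2, ih3, ih4, ih5, ih6⟩ := ih hs' (fun y hy => he y (List.mem_cons_of_mem _ hy))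
      (fun y hy => hw y (List.mem_cons_of_mem _ hy))
      (fun y hy z hz hzy => ho y (List.mem_cons_of_mem _ hy) z (List.mem_cons_of_mem _ hz) hzy)
    obtain ⟨b1, b2, b3, b4, b5, b6, b7⟩ := blockProps φ v m x (ℓ x) (P x) (he x hxL) (hw x hxL)
    set B := (List.range (ℓ x)).map fun t => P x (t + 1) with hB
    set Q' := (L'.map fun x => (List.range (ℓ x)).map fun t => P x (t + 1)).flatten with hQ'
    have hflat : ((x :: L').map fun x => (List.range (ℓ x)).map fun t => P x (t + 1)).flatten
        = B ++ Q' := by simp [hB, hQ']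
    rw [hflat]
    refine ⟨?_, ?_, ?_, ?_, ?_, ?_⟩
    · simp only [List.length_append, ih1, b1, List.map_cons, List.sum_cons]
    · intro p hp
      rcases List.mem_append.1 hp with h | h
      · exact b2 p h
      · exact ih2 p h
    · intro p hp
      rcases List.mem_append.1 hp with h | h
      · exact b3 p h
      · exact ih3 p h
    · rw [List.Chain', List.isChain_append]
      refine ⟨b4, ih4, ?_⟩
      intro a ha c hc
      rw [b5, Option.mem_def, Option.some_inj] at ha
      subst ha
      have hQ'ne : Q' ≠ [] := by
        intro hnil; rw [hnil] at hc; simp at hc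
      have hL'ne : L' ≠ [] := by
        intro hnil; rw [hnil] at hQ'; simp [hQ'] at hQ'ne
      obtain ⟨x₂, L'', rfl⟩ := List.exists_cons_of_ne_nil hL'ne
      have hc2 := ih6 x₂ rfl
      rw [hc2, Option.mem_def, Option.some_inj] at hc
      subst hc
      have hx₂ : x₂ ∈ x :: x₂ :: L'' := List.mem_cons_of_mem _ (List.mem_cons_self)
      constructor
      · exact ho x hxL x₂ hx₂ (hxgt x₂ (List.mem_cons_self))
      · intro t ht1 ht2
        have hPx₂ : 1 ≤ P x₂ 1 ∧ P x₂ 1 ≤ m := by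
          obtain ⟨w1, w2, _⟩ := hw x₂ hx₂
          rw [startIdx, if_pos (he x₂ hx₂)] at w2
          exact w2 1 le_rfl w1
        have := b7 t ht1 (le_trans ht2 hPx₂.2)
        exact le_trans this (le_max_left _ _)
    · intro p hp t ht1 ht2
      rw [List.getLast?_append] at hp
      rcases hQ'e : Q'.getLast? with _ | q
      · rw [hQ'e] at hp
        simp only [Option.or] at hp
        rw [b5] at hp
        rw [Option.some_inj] at hp
        subst hp
        exact b7 t ht1 ht2
      · rw [hQ'e] at hp
        simp only [Option.or, Option.some_inj] at hp
        subst hp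
        exact ih5 q hQ'e t ht1 ht2
    · intro y hy
      rw [List.head?_cons, Option.some_inj] at hy
      subst hy
      rw [List.head?_append, b6]
      simp

lemma extendWit (φ : V → ℕ) (v : ℕ → V) (m i len : ℕ) (p : ℕ → ℕ)
    (h : IsCWit φ v m i len p) (hle : φ (v (m + 1)) ≤ i) :
    IsCWit φ v (m + 1) i len p := by
  obtain ⟨h1, h2, h3, h4, h5, h6, h7⟩ := h
  refine ⟨h1, fun t ht1 ht2 => ⟨(h2 t ht1 ht2).1, le_trans (h2 t ht1 ht2).2 (by omega)⟩,
    h3, h4, h5, h6, ?_⟩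
  intro t ht1 ht2
  rcases Nat.lt_or_ge t (m + 1) with h | h
  · exact h7 t ht1 (by omega)
  · have : t = m + 1 := by omega
    rw [this]; exact hle

lemma geomAux : ∀ n : ℕ, (∑ p ∈ Finset.range n, 2 ^ p) + 1 = 2 ^ n := by
  intro n
  induction n with
  | zero => simp
  | succ n ih => rw [Finset.sum_range_succ, pow_succ]; omega

/-- Overflow update lemma for an even colour `d = φ(v_{m+1})` when no entry of `b` is an odd
colour `< d`: for the maximal index `j` satisfying `OverflowIdx`, setting `c_i = b_i` for
`i > j` with `b_i = ⊥` or `b_i > d`, `c_i = d` for `i > j` with `b_i` a number `≤ d`,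
`c_j = d`, and `c_i = ⊥` for `i < j`, yields a colour witness for
`ρ' = v_1,…,v_m,v_{m+1}`. -/
theorem colour_witness_update_overflow (lo hi : ℕ) (hlo : lo = 1 ∨ lo = 2) (hlohi : lo ≤ hi)
    (φ : V → ℕ) (hφ : ∀ x, φ x ∈ Set.Icc lo hi) (v : ℕ → V) (m : ℕ) (hm : 1 ≤ m)
    (k : ℕ) (b : ℕ → Option ℕ) (hb : IsColourWitness lo hi φ v m k b)
    (hdeven : Even (φ (v (m + 1))))
    (hnoodd : ∀ i ≤ k, ¬ ∃ c, b i = some c ∧ Odd c ∧ c < φ (v (m + 1)))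
    (j : ℕ) (hj : j ≤ k)
    (hjidx : OverflowIdx k b (φ (v (m + 1))) j)
    (hjmax : ∀ j', j' ≤ k → OverflowIdx k b (φ (v (m + 1))) j' → j' ≤ j) :
    IsColourWitness lo hi φ v (m + 1) k
      (fun i => if j < i then
                  (if ∃ c, b i = some c ∧ c ≤ φ (v (m + 1)) then some (φ (v (m + 1))) else b i)
                else if i = j then some (φ (v (m + 1))) else none) := by
  classical
  obtain ⟨hbC, hbOrd, hbCon, hb0, ℓ, P, hbWit, hbOW, hbLen⟩ := hb
  set d := φ (v (m + 1)) with hd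
  set cf : ℕ → Option ℕ := fun i => if j < i then
      (if ∃ c, b i = some c ∧ c ≤ d then some d else b i)
      else if i = j then some d else none with hcf
  -- basic facts about d
  have hdlo : lo ≤ d := (hφ (v (m + 1))).1
  have hdhi : d ≤ hi := (hφ (v (m + 1))).2
  have hdCm : CminusMem lo hi d := by
    refine ⟨hdlo, hdhi, ?_⟩
    rcases Nat.even_or_odd hi with h | h
    · exact Or.inl h
    · exact Or.inr fun hdh => (Nat.not_odd_iff_even.2 hdeven) (hdh ▸ h)
  have hloCm : CminusMem lo hi lo := by
    refine ⟨le_rfl, hlohi, ?_⟩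
    rcases Nat.even_or_odd hi with h | h
    · exact Or.inl h
    · refine Or.inr fun hlh => ?_
      have : d = hi := by omega
      exact (Nat.not_odd_iff_even.2 hdeven) (this ▸ h)
  -- entries ≤ d are even
  have hevle : ∀ p, p ≤ k → ∀ x, b p = some x → x ≤ d → Even x := by
    intro p hp x hbp hxd
    rcases Nat.even_or_odd x with h | h
    · exact h
    · exfalso
      have hxd' : x ≠ d := fun hh => (Nat.not_odd_iff_even.2 hdeven) (hh ▸ h)
      exact hnoodd p hp ⟨x, hbp, h, by omega⟩
  have hmono : ∀ p q, p < q → q ≤ k → ∀ x y, b p = some x → b q = some y → x ≤ y :=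
    fun p q h hq x y hp hy => hbOrd q p h hq y x hy hp
  have hbelow : ∀ p, p < j → ∃ y, b p = some y ∧ Even y := hjidx.2.2
  -- evaluation of cf
  have hcfj : cf j = some d := by simp [hcf]
  have hcflt : ∀ p, p < j → cf p = none := by
    intro p hp
    simp [hcf, Nat.lt_asymm hp, Nat.ne_of_lt hp]
  have hcfgt : ∀ p, j < p → ∀ x, cf p = some x →
      (x = d ∧ ∃ y, b p = some y ∧ y ≤ d) ∨ (b p = some x ∧ d < x) := by
    intro p hp x hx
    rw [hcf] at hx
    beta_reduce at hx
    rw [if_pos hp] at hx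
    by_cases h : ∃ c, b p = some c ∧ c ≤ d
    · rw [if_pos h] at hx
      exact Or.inl ⟨(Option.some_inj.1 hx).symm, h⟩
    · rw [if_neg h] at hx
      refine Or.inr ⟨hx, ?_⟩
      by_contra hle
      exact h ⟨x, hx, by omega⟩
  have hcfkeep : ∀ p, j < p → ∀ x, b p = some x → d < x → cf p = some x := by
    intro p hp x hbp hdx
    rw [hcf]
    beta_reduce
    rw [if_pos hp, if_neg]
    · exact hbp
    · rintro ⟨c, hc, hcd⟩
      rw [hbp] at hc
      have := Option.some_inj.1 hc
      omega
  have hocc_cd : occursIn k cf d := ⟨j, hj, hcfj⟩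
  have hocc_c : ∀ x, occursIn k cf x ↔
      (x = d ∨ (d < x ∧ ∃ q, j < q ∧ q ≤ k ∧ b q = some x)) := by
    intro x
    constructor
    · rintro ⟨p, hp, hcp⟩
      rcases Nat.lt_trichotomy p j with h | h | h
      · rw [hcflt p h] at hcp; exact absurd hcp (by simp)
      · subst h
        rw [hcfj] at hcp
        exact Or.inl (Option.some_inj.1 hcp).symm
      · rcases hcfgt p h x hcp with ⟨rfl, _⟩ | ⟨hbp, hdx⟩
        · exact Or.inl rfl
        · exact Or.inr ⟨hdx, p, h, hp, hbp⟩
    · rintro (rfl | ⟨hdx, q, hjq, hqk, hbq⟩)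
      · exact hocc_cd
      · exact ⟨q, hqk, hcfkeep q hjq x hbq hdx⟩
  have hocc_cb : ∀ x, occursIn k cf x → x ≠ d →
      d < x ∧ ∃ q, j < q ∧ q ≤ k ∧ b q = some x := by
    intro x hx hxd
    rcases (hocc_c x).1 hx with h | h
    · exact absurd h hxd
    · exact h
  have hodd_gt_d : ∀ o', Odd o' → occursIn k b o' → d < o' := by
    rintro o' ho' ⟨p, hp, hbp⟩
    by_contra h
    exact (Nat.not_odd_iff_even.2 (hevle p hp o' hbp (by omega))) ho'
  have hodd_ne_d : ∀ o', Odd o' → o' ≠ d := fun o' ho' h =>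
    (Nat.not_odd_iff_even.2 hdeven) (h ▸ ho')
  have hbj_odd : ∀ c', b j = some c' → Odd c' ∧ d < c' := by
    intro c' hc'
    rcases hjidx.2.1 with h | ⟨o, ho, hdo, hoodd⟩
    · rw [h] at hc'; exact absurd hc' (by simp)
    · rw [ho] at hc'
      have h2 := Option.some_inj.1 hc'
      subst h2
      exact ⟨hoodd, hdo⟩
  have hodd_occ_c : ∀ o', Odd o' → occursIn k cf o' →
      ∃ q, j < q ∧ q ≤ k ∧ b q = some o' :=
    fun o' ho' h => (hocc_cb o' h (hodd_ne_d o' ho')).2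
  -- the merged colours
  set M : Finset ℕ := (Finset.range (hi + 1)).filter
      (fun x => occursIn k b x ∧ Even x ∧ (x ≤ d ∨ ¬ occursIn k cf x)) with hM
  have hMmem : ∀ x, x ∈ M ↔
      (x ≤ hi ∧ occursIn k b x ∧ Even x ∧ (x ≤ d ∨ ¬ occursIn k cf x)) := by
    intro x
    rw [hM, Finset.mem_filter, Finset.mem_range, Nat.lt_succ_iff]
  set L : List ℕ := (M.sort (· ≤ ·)).reverse with hL
  have hLmem : ∀ x, x ∈ L ↔ x ∈ M := by
    intro x; rw [hL, List.mem_reverse, Finset.mem_sort]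
  have hLsort : L.Pairwise (· > ·) := by
    rw [hL]
    exact List.pairwise_reverse.2 (Finset.sortedLT_sort M).pairwise
  have hMeven : ∀ x ∈ L, Even x := fun x hx => ((hMmem x).1 ((hLmem x).1 hx)).2.2.1
  have hMocc : ∀ x ∈ L, occursIn k b x := fun x hx => ((hMmem x).1 ((hLmem x).1 hx)).2.1
  have hMwit : ∀ x ∈ L, IsCWit φ v m x (ℓ x) (P x) := fun x hx => hbWit x (hMocc x hx)
  have hMord : ∀ x ∈ L, ∀ y ∈ L, y < x → P x (ℓ x) < P y 1 := by
    intro x hx y hy hyx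
    have h := hbOW x y (hMocc x hx) (hMocc y hy) hyx
    rwa [startIdx, if_pos (hMeven y hy)] at h
  obtain ⟨q1, q2, q3, q4, q5, q6⟩ := chainProps φ v m ℓ P L hLsort hMeven hMwit hMord
  set Q : List ℕ := (L.map fun x => (List.range (ℓ x)).map fun t => P x (t + 1)).flatten with hQ
  set W : List ℕ := Q ++ [m + 1] with hW
  have hWne : W ≠ [] := by simp [hW]
  have hsumM : (L.map ℓ).sum = ∑ x ∈ M, ℓ x := by
    rw [hL, List.map_reverse, List.sum_reverse]
    have hperm : List.Perm ((M.sort (· ≤ ·)).map ℓ) (M.toList.map ℓ) :=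
      (Finset.sort_perm_toList _ _).map ℓ
    rw [hperm.sum_eq]
    exact Finset.sum_map_toList M ℓ
  have hWlen : W.length = (∑ x ∈ M, ℓ x) + 1 := by
    rw [hW]
    simp only [List.length_append, List.length_singleton]
    rw [q1, hsumM]
  have hWlast? : W.getLast? = some (m + 1) := by rw [hW]; exact List.getLast?_concat
  have hWlast : W.getLast hWne = m + 1 := by
    have h := List.getLast?_eq_getLast hWne
    rw [hWlast?] at h
    exact (Option.some_inj.1 h).symm
  have hNewWit : IsCWit φ v (m + 1) d W.length (fun t => W.getD (t - 1) 0) := by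
    apply listToWit φ v m d hdeven W hWne
    · intro p hp
      rw [hW, List.mem_append] at hp
      rcases hp with h | h
      · have := q2 p h; omega
      · simp only [List.mem_singleton] at h; omega
    · rw [hW, List.Chain', List.isChain_append]
      refine ⟨q4, List.isChain_singleton _, ?_⟩
      intro a ha c hc
      simp only [List.head?_cons, Option.mem_def, Option.some_inj] at hc
      subst hc
      have haQ : a ∈ Q := List.mem_of_mem_getLast? ha
      rw [Option.mem_def] at ha
      constructor
      · have := q2 a haQ; omega
      · intro t ht1 ht2
        rcases Nat.lt_or_ge t (m + 1) with h | h
        · exact le_trans (q5 a ha t ht1 (by omega)) (le_max_left _ _)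
        · have ht : t = m + 1 := by omega
          rw [ht, ← hd]
          exact le_max_right _ _
    · rw [hW, List.dropLast_concat]
      exact q3
    · rw [hWlast]
    · intro t ht1 ht2
      rw [hWlast] at ht1
      have ht : t = m + 1 := by omega
      rw [ht, ← hd]
  set ℓ' : ℕ → ℕ := fun x => if x = d then W.length else ℓ x with hl'
  set P' : ℕ → ℕ → ℕ := fun x => if x = d then (fun t => W.getD (t - 1) 0) else P x with hp'
  have hl'd : ℓ' d = W.length := by simp [hl']
  have hl'ne : ∀ x, x ≠ d → ℓ' x = ℓ x := by intro x hx; simp [hl', hx]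
  have hp'd : P' d = fun t => W.getD (t - 1) 0 := by simp [hp']
  have hp'ne : ∀ x, x ≠ d → P' x = P x := by intro x hx; simp [hp', hx]
  have hcf_occ : ∀ p, p ≤ k → ∀ x, cf p = some x → x ≠ d →
      j < p ∧ b p = some x ∧ d < x := by
    intro p hp x hcpx hxd
    rcases Nat.lt_trichotomy p j with h | h | h
    · rw [hcflt p h] at hcpx; exact absurd hcpx (by simp)
    · exfalso; subst h; rw [hcfj] at hcpx
      exact hxd (Option.some_inj.1 hcpx).symm
    · rcases hcfgt p h x hcpx with ⟨rfl, _⟩ | ⟨hbp, hdx⟩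
      · exact absurd rfl hxd
      · exact ⟨h, hbp, hdx⟩
  refine ⟨?_, ?_, ?_, ?_, ℓ', P', ?_, ?_, ?_⟩
  · -- entries in C⁻
    intro p hp x hcp
    rcases Nat.lt_trichotomy p j with h | h | h
    · rw [hcflt p h] at hcp; exact absurd hcp (by simp)
    · subst h; rw [hcfj] at hcp
      exact (Option.some_inj.1 hcp) ▸ hdCm
    · rcases hcfgt p h x hcp with ⟨rfl, _⟩ | ⟨hbp, _⟩
      · exact hdCm
      · exact hbC p hp x hbp
  · -- order
    intro p q hqp hpk x y hcp hcq
    rcases Nat.lt_trichotomy q j with h | h | h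
    · rw [hcflt q h] at hcq; exact absurd hcq (by simp)
    · subst h
      rw [hcfj] at hcq
      have hy : y = d := (Option.some_inj.1 hcq).symm
      subst hy
      rcases hcfgt p (by omega) x hcp with ⟨rfl, _⟩ | ⟨_, hdx⟩
      · exact le_rfl
      · omega
    · rcases hcfgt q h y hcq with ⟨rfl, y', hby', hy'd⟩ | ⟨hbq, hdy⟩
      · rcases hcfgt p (by omega) x hcp with ⟨rfl, _⟩ | ⟨_, hdx⟩
        · exact le_rfl
        · omega
      · rcases hcfgt p (by omega) x hcp with ⟨rfl, x', hbx', hx'd⟩ | ⟨hbp, _⟩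
        · exact absurd (hmono q p hqp hpk y x' hbq hbx') (by omega)
        · exact hmono q p hqp hpk y x hbq hbp
  · -- conciseness
    intro o' ho' p q hpk hqk hpq hcp hcq
    have hde := hodd_ne_d o' ho'
    obtain ⟨hjp, hbp, _⟩ := hcf_occ p hpk o' hcp hde
    obtain ⟨hjq, hbq, _⟩ := hcf_occ q hqk o' hcq hde
    exact hbCon o' ho' p q hpk hqk hpq hbp hbq
  · -- b 0 not odd
    intro x hcx hox
    rcases Nat.eq_zero_or_pos j with h0 | h0
    · have hc0 : cf 0 = some d := h0 ▸ hcfj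
      exact hodd_ne_d x hox (Option.some_inj.1 (hc0.symm.trans hcx)).symm
    · rw [hcflt 0 h0] at hcx; exact absurd hcx (by simp)
  · -- witnesses
    intro x hx
    by_cases hxd : x = d
    · subst hxd
      rw [hl'd, hp'd]
      exact hNewWit
    · obtain ⟨hdx, qx, hjq, hqk, hbq⟩ := hocc_cb x hx hxd
      rw [hl'ne x hxd, hp'ne x hxd]
      exact extendWit φ v m x (ℓ x) (P x) (hbWit x ⟨qx, hqk, hbq⟩) (by rw [← hd]; omega)
  · -- ordered witnesses
    intro x y hx hy hyx
    by_cases hyd : y = d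
    · subst hyd
      have hxd : x ≠ d := by omega
      rw [hp'd, hp'ne x hxd, hl'ne x hxd]
      rw [startIdx, if_pos hdeven]
      show P x (ℓ x) < W.getD 0 0
      obtain ⟨hdx, qx, hjqx, hqxk, hbqx⟩ := hocc_cb x hx hxd
      have hoccbx : occursIn k b x := ⟨qx, hqxk, hbqx⟩
      have hPxm : P x (ℓ x) ≤ m := by
        obtain ⟨w1, w2, _⟩ := hbWit x hoccbx
        exact (w2 (ℓ x) (by rw [startIdx]; split <;> omega) le_rfl).2
      rcases hLL : L with _ | ⟨x₁, L''⟩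
      · have hQnil : Q = [] := by rw [hQ, hLL]; rfl
        rw [hW, hQnil]
        simp only [List.nil_append, List.getD_cons_zero]
        omega
      · have hQhead : Q.head? = some (P x₁ 1) := q6 x₁ (by rw [hLL]; rfl)
        have hWget : W.getD 0 0 = P x₁ 1 := by
          rw [hW]
          rcases hQc : Q with _ | ⟨a, Q'⟩
          · rw [hQc] at hQhead; exact absurd hQhead (by simp)
          · rw [hQc] at hQhead
            simp only [List.head?_cons, Option.some_inj] at hQhead
            rw [List.cons_append, List.getD_cons_zero]
            exact hQhead
        rw [hWget]
        have hx₁M : x₁ ∈ M := (hLmem x₁).1 (by rw [hLL]; exact List.mem_cons_self)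
        obtain ⟨hx₁hi, hx₁occ, hx₁ev, hx₁or⟩ := (hMmem x₁).1 hx₁M
        have hx₁x : x₁ < x := by
          rcases hx₁or with h | h
          · omega
          · by_cases hle : x₁ ≤ d
            · omega
            · obtain ⟨r, hrk, hbr⟩ := hx₁occ
              have hrj : r < j := by
                rcases Nat.lt_trichotomy r j with hh | hh | hh
                · exact hh
                · exfalso; subst hh
                  exact (Nat.not_odd_iff_even.2 hx₁ev) (hbj_odd x₁ hbr).1
                · exact absurd ⟨r, hrk, hcfkeep r hh x₁ hbr (by omega)⟩ h
              have hlex : x₁ ≤ x := hmono r qx (by omega) hqxk x₁ x hbr hbqx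
              have hnex : x₁ ≠ x := fun hh => h (hh ▸ hx)
              omega
        have hlt := hbOW x x₁ hoccbx hx₁occ hx₁x
        rwa [startIdx, if_pos hx₁ev] at hlt
    · by_cases hxd : x = d
      · exfalso
        rcases (hocc_c y).1 hy with h | h
        · exact hyd h
        · omega
      · rw [hp'ne x hxd, hp'ne y hyd, hl'ne x hxd]
        have hbx : occursIn k b x := by
          obtain ⟨_, qq, h1, h2, h3⟩ := hocc_cb x hx hxd; exact ⟨qq, h2, h3⟩
        have hby : occursIn k b y := by
          obtain ⟨_, qq, h1, h2, h3⟩ := hocc_cb y hy hyd; exact ⟨qq, h2, h3⟩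
        exact hbOW x y hbx hby hyx
  · -- length constraints
    intro i hiCm
    have hmemU : ∀ (S : ℕ → Option ℕ) (i' x : ℕ), x ∈ unblkF hi k S i' ↔
        (x ≤ hi ∧ occursIn k S x ∧ i' ≤ x ∧
          ∀ o', Odd o' → i' < o' → o' ≤ x → ¬ occursIn k S o') := by
      intro S i' x
      simp only [unblkF, Finset.mem_filter, Finset.mem_range, Nat.lt_succ_iff]
    have hmemP : ∀ (S : ℕ → Option ℕ) (i' p : ℕ), p ∈ ubpF hi k S i' ↔
        (p ≤ k ∧ ∃ x, S p = some x ∧ x ∈ unblkF hi k S i') := by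
      intro S i' p
      simp only [ubpF, Finset.mem_filter, Finset.mem_range, Nat.lt_succ_iff]
    have hbodd_pos : ∀ o'', Odd o'' → ∀ r, r ≤ k → b r = some o'' → ¬ r < j := by
      intro o'' ho'' r hrk hbr hrj
      obtain ⟨z, hz, hzev⟩ := hbelow r hrj
      rw [hbr] at hz
      have heq := Option.some_inj.1 hz
      obtain ⟨t, ht⟩ := ho''
      obtain ⟨s, hs⟩ := hzev
      omega
    rcases le_or_gt i d with hid | hid
    · -- case i ≤ d
      have hdU : d ∈ unblkF hi k cf i := by
        rw [hmemU]
        refine ⟨hdhi, hocc_cd, hid, ?_⟩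
        intro o' ho' hio' ho'd hocc
        rcases (hocc_c o').1 hocc with h | h
        · exact hodd_ne_d o' ho' h
        · omega
      have hjP : j ∈ ubpF hi k cf i := by
        rw [hmemP]
        exact ⟨hj, d, hcfj, hdU⟩
      set K : Finset ℕ := (unblkF hi k cf i).erase d with hK
      set B : Finset ℕ := (ubpF hi k cf i).erase j with hB
      have hRHS : ∑ x ∈ unblkF hi k cf i, ℓ' x = (∑ x ∈ K, ℓ x) + W.length := by
        rw [← Finset.sum_erase_add _ _ hdU, hl'd, ← hK]
        congr 1
        refine Finset.sum_congr rfl ?_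
        intro x hx
        exact hl'ne x (Finset.mem_erase.1 hx).1
      have hLHS : ∑ p ∈ ubpF hi k cf i, (2:ℕ) ^ p = (∑ p ∈ B, 2 ^ p) + 2 ^ j := by
        rw [← Finset.sum_erase_add _ _ hjP, ← hB]
      rw [hRHS, hLHS]
      have hBgt : ∀ p ∈ B, j < p ∧ p ≤ k ∧ ∃ x, cf p = some x ∧ x ∈ unblkF hi k cf i := by
        intro p hp
        obtain ⟨hpj, hp2⟩ := Finset.mem_erase.1 hp
        rw [hmemP] at hp2
        obtain ⟨hpk, x, hcpx, hxU⟩ := hp2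
        rcases Nat.lt_trichotomy p j with h | h | h
        · rw [hcflt p h] at hcpx; exact absurd hcpx (by simp)
        · exact absurd h hpj
        · exact ⟨h, hpk, x, hcpx, hxU⟩
      rcases hjidx.2.1 with hbjn | ⟨o, hbjo, hdo, hoodd⟩
      · -- b j = none
        have hoddc : ∀ o'', Odd o'' → occursIn k b o'' → occursIn k cf o'' := by
          rintro o'' ho'' ⟨r, hrk, hbr⟩
          rcases Nat.lt_trichotomy r j with h | h | h
          · exact absurd h (hbodd_pos o'' ho'' r hrk hbr)
          · exfalso; subst h; rw [hbjn] at hbr; exact absurd hbr (by simp)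
          · exact ⟨r, hrk, hcfkeep r h o'' hbr (hodd_gt_d o'' ho'' ⟨r, hrk, hbr⟩)⟩
        have hBsub : ∀ p ∈ B, p ∈ ubpF hi k b lo := by
          intro p hp
          obtain ⟨hjp, hpk, x, hcpx, hxU⟩ := hBgt p hp
          rw [hmemP]
          rcases hcfgt p hjp x hcpx with ⟨rfl, z, hbz, hzd⟩ | ⟨hbp, hdx⟩
          · refine ⟨hpk, z, hbz, ?_⟩
            rw [hmemU]
            obtain ⟨hzlo, hzhi, _⟩ := hbC p hpk z hbz
            refine ⟨hzhi, ⟨p, hpk, hbz⟩, hzlo, ?_⟩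
            intro o'' ho'' hlo'' ho''z hocc
            exact absurd (hodd_gt_d o'' ho'' hocc) (by omega)
          · refine ⟨hpk, x, hbp, ?_⟩
            rw [hmemU]
            rw [hmemU] at hxU
            obtain ⟨hxhi, hxoccc, hix, hxblk⟩ := hxU
            obtain ⟨hxlo, _, _⟩ := hbC p hpk x hbp
            refine ⟨hxhi, ⟨p, hpk, hbp⟩, hxlo, ?_⟩
            intro o'' ho'' hlo'' ho''x hocc
            have hdo'' := hodd_gt_d o'' ho'' hocc
            exact hxblk o'' ho'' (by omega) ho''x (hoddc o'' ho'' hocc)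
        have hRsub : ∀ p, p < j → p ∈ ubpF hi k b lo := by
          intro p hpj
          obtain ⟨z, hbz, hzev⟩ := hbelow p hpj
          have hpk : p ≤ k := by omega
          rw [hmemP]
          obtain ⟨hzlo, hzhi, _⟩ := hbC p hpk z hbz
          refine ⟨hpk, z, hbz, ?_⟩
          rw [hmemU]
          refine ⟨hzhi, ⟨p, hpk, hbz⟩, hzlo, ?_⟩
          intro o'' ho'' hlo'' ho''z hocc
          obtain ⟨q', hjq', hq'k, hbq'⟩ := hodd_occ_c o'' ho'' (hoddc o'' ho'' hocc)
          have hzo : z ≤ o'' := hmono p q' (by omega) hq'k z o'' hbz hbq'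
          obtain ⟨t, ht⟩ := ho''
          obtain ⟨s, hs⟩ := hzev
          omega
        have hUsub : ∀ x ∈ unblkF hi k b lo, x ∈ M ∨ x ∈ K := by
          intro x hx
          rw [hmemU] at hx
          obtain ⟨hxhi, hxocc, hxlo, hxblk⟩ := hx
          have hxev : Even x := by
            rcases Nat.even_or_odd x with h | h
            · exact h
            · exfalso
              have hdx := hodd_gt_d x h hxocc
              exact hxblk x h (by omega) le_rfl hxocc
          by_cases hxd : x ≤ d
          · exact Or.inl ((hMmem x).2 ⟨hxhi, hxocc, hxev, Or.inl hxd⟩)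
          · by_cases hxc : occursIn k cf x
            · refine Or.inr (Finset.mem_erase.2 ⟨by omega, ?_⟩)
              rw [hmemU]
              refine ⟨hxhi, hxc, by omega, ?_⟩
              intro o'' ho'' hio'' ho''x hocc
              obtain ⟨q', hjq', hq'k, hbq'⟩ := hodd_occ_c o'' ho'' hocc
              have hdo'' := hodd_gt_d o'' ho'' ⟨q', hq'k, hbq'⟩
              exact hxblk o'' ho'' (by omega) ho''x ⟨q', hq'k, hbq'⟩
            · exact Or.inl ((hMmem x).2 ⟨hxhi, hxocc, hxev, Or.inr hxc⟩)
        have hMK : Disjoint M K := by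
          rw [Finset.disjoint_left]
          intro x hxM hxK
          obtain ⟨hxhi, hxocc, hxev, hxor⟩ := (hMmem x).1 hxM
          obtain ⟨hxd, hxU⟩ := Finset.mem_erase.1 hxK
          rw [hmemU] at hxU
          obtain ⟨_, hxoccc, _, _⟩ := hxU
          rcases hxor with h | h
          · rcases (hocc_c x).1 hxoccc with hh | hh
            · exact hxd hh
            · omega
          · exact h hxoccc
        have hdisjBR : Disjoint B (Finset.range j) := by
          rw [Finset.disjoint_left]
          intro p hpB hpR
          have h1 := (hBgt p hpB).1
          rw [Finset.mem_range] at hpR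
          omega
        have hsum1 : (∑ p ∈ B, (2:ℕ) ^ p) + (∑ p ∈ Finset.range j, 2 ^ p)
            ≤ ∑ p ∈ ubpF hi k b lo, 2 ^ p := by
          rw [← Finset.sum_union hdisjBR]
          apply Finset.sum_le_sum_of_subset
          intro p hp
          rcases Finset.mem_union.1 hp with h | h
          · exact hBsub p h
          · exact hRsub p (Finset.mem_range.1 h)
        have hsum2 := hbLen lo hloCm
        have hsum3 : (∑ x ∈ unblkF hi k b lo, ℓ x) ≤ (∑ x ∈ M, ℓ x) + (∑ x ∈ K, ℓ x) := by
          rw [← Finset.sum_union hMK]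
          apply Finset.sum_le_sum_of_subset
          intro x hx
          exact Finset.mem_union.2 (hUsub x hx)
        have hgeo := geomAux j
        omega
      · -- b j = some o
        have hnotocc_o : ¬ occursIn k cf o := by
          intro hocc
          obtain ⟨q', hjq', hq'k, hbq'⟩ := hodd_occ_c o hoodd hocc
          exact hbCon o hoodd q' j hq'k hj (by omega) hbq' hbjo
        have habove : ∀ q', j < q' → q' ≤ k → ∀ z, b q' = some z → o ≤ z :=
          fun q' h hk z hz => hmono j q' h hk o z hbjo hz
        have ho1Cm : CminusMem lo hi (o + 1) := by
          obtain ⟨holo, hohi, hone⟩ := hbC j hj o hbjo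
          have hone' : o ≠ hi := by
            rcases hone with h | h
            · intro hh
              obtain ⟨t, ht⟩ := h
              obtain ⟨s, hs⟩ := hoodd
              omega
            · exact h
          refine ⟨by omega, by omega, ?_⟩
          rcases Nat.even_or_odd hi with h | h
          · exact Or.inl h
          · refine Or.inr fun hh => ?_
            obtain ⟨t, ht⟩ := h
            obtain ⟨s, hs⟩ := hoodd
            omega
        have hBsub : ∀ p ∈ B, p ∈ ubpF hi k b (o + 1) := by
          intro p hp
          obtain ⟨hjp, hpk, x, hcpx, hxU⟩ := hBgt p hp
          rw [hmemU] at hxU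
          obtain ⟨hxhi, hxoccc, hix, hxblk⟩ := hxU
          rcases hcfgt p hjp x hcpx with ⟨rfl, z, hbz, hzd⟩ | ⟨hbp, hdx⟩
          · exact absurd (habove p hjp hpk z hbz) (by omega)
          · rw [hmemP]
            refine ⟨hpk, x, hbp, ?_⟩
            rw [hmemU]
            have hox : o ≤ x := habove p hjp hpk x hbp
            have hxno : x ≠ o := by
              intro hh
              rw [hh] at hxoccc
              exact hnotocc_o hxoccc
            refine ⟨hxhi, ⟨p, hpk, hbp⟩, by omega, ?_⟩
            intro o'' ho'' h1 h2 hocc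
            obtain ⟨r, hrk, hbr⟩ := hocc
            rcases Nat.lt_trichotomy r j with h | h | h
            · exact hbodd_pos o'' ho'' r hrk hbr h
            · subst h
              have heq := Option.some_inj.1 (hbr.symm.trans hbjo)
              omega
            · have hoccc : occursIn k cf o'' := ⟨r, hrk, hcfkeep r h o'' hbr (by omega)⟩
              exact hxblk o'' ho'' (by omega) h2 hoccc
        have hUsub : ∀ x ∈ unblkF hi k b (o + 1), x ∈ K := by
          intro x hx
          rw [hmemU] at hx
          obtain ⟨hxhi, hxocc, hxo1, hxblk⟩ := hx
          obtain ⟨r, hrk, hbr⟩ := hxocc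
          have hjr : j < r := by
            rcases Nat.lt_trichotomy r j with h | h | h
            · exfalso
              have hxo : x ≤ o := hmono r j h hj x o hbr hbjo
              omega
            · exfalso
              subst h
              have heq := Option.some_inj.1 (hbr.symm.trans hbjo)
              omega
            · exact h
          have hdx : d < x := by omega
          have hoccc : occursIn k cf x := ⟨r, hrk, hcfkeep r hjr x hbr hdx⟩
          refine Finset.mem_erase.2 ⟨by omega, ?_⟩
          rw [hmemU]
          refine ⟨hxhi, hoccc, by omega, ?_⟩
          intro o'' ho'' h1 h2 hocc
          obtain ⟨q', hjq', hq'k, hbq'⟩ := hodd_occ_c o'' ho'' hocc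
          have hoo'' : o ≤ o'' := habove q' hjq' hq'k o'' hbq'
          have hne : o'' ≠ o := by
            intro hh
            rw [hh] at hocc
            exact hnotocc_o hocc
          have ho1o'' : o + 1 < o'' := by
            obtain ⟨t, ht⟩ := ho''
            obtain ⟨s, hs⟩ := hoodd
            omega
          exact hxblk o'' ho'' ho1o'' h2 ⟨q', hq'k, hbq'⟩
        have hRsub : ∀ p, p < j → p ∈ ubpF hi k b lo := by
          intro p hpj
          obtain ⟨z, hbz, hzev⟩ := hbelow p hpj
          have hpk : p ≤ k := by omega
          have hzo : z ≤ o := hmono p j hpj hj z o hbz hbjo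
          rw [hmemP]
          obtain ⟨hzlo, hzhi, _⟩ := hbC p hpk z hbz
          refine ⟨hpk, z, hbz, ?_⟩
          rw [hmemU]
          refine ⟨hzhi, ⟨p, hpk, hbz⟩, hzlo, ?_⟩
          intro o'' ho'' h1 h2 hocc
          obtain ⟨r, hrk, hbr⟩ := hocc
          have hoo'' : o ≤ o'' := by
            rcases Nat.lt_trichotomy r j with h | h | h
            · exact absurd h (hbodd_pos o'' ho'' r hrk hbr)
            · subst h
              have heq := Option.some_inj.1 (hbr.symm.trans hbjo)
              omega
            · exact habove r h hrk o'' hbr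
          obtain ⟨t, ht⟩ := ho''
          obtain ⟨s, hs⟩ := hzev
          obtain ⟨t2, ht2⟩ := hoodd
          omega
        have hUlosub : ∀ x ∈ unblkF hi k b lo, x ∈ M := by
          intro x hx
          rw [hmemU] at hx
          obtain ⟨hxhi, hxocc, hxlo, hxblk⟩ := hx
          have hxev : Even x := by
            rcases Nat.even_or_odd x with h | h
            · exact h
            · exfalso
              have hdx := hodd_gt_d x h hxocc
              exact hxblk x h (by omega) le_rfl hxocc
          have hxo : x < o := by
            by_contra hh
            exact hxblk o hoodd (by omega) (by omega) ⟨j, hj, hbjo⟩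
          refine (hMmem x).2 ⟨hxhi, hxocc, hxev, ?_⟩
          by_cases hxd : x ≤ d
          · exact Or.inl hxd
          · refine Or.inr fun hocc => ?_
            obtain ⟨q', hjq', hq'k, hbq'⟩ := (hocc_cb x hocc (by omega)).2
            exact absurd (habove q' hjq' hq'k x hbq') (by omega)
        have hsum0 : (∑ p ∈ Finset.range j, (2:ℕ) ^ p) ≤ ∑ p ∈ ubpF hi k b lo, 2 ^ p := by
          apply Finset.sum_le_sum_of_subset
          intro p hp
          exact hRsub p (Finset.mem_range.1 hp)
        have hsum1 := hbLen lo hloCm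
        have hsum2 : (∑ x ∈ unblkF hi k b lo, ℓ x) ≤ ∑ x ∈ M, ℓ x :=
          Finset.sum_le_sum_of_subset fun x hx => hUlosub x hx
        have hsum3 : (∑ p ∈ B, (2:ℕ) ^ p) ≤ ∑ p ∈ ubpF hi k b (o + 1), 2 ^ p :=
          Finset.sum_le_sum_of_subset fun p hp => hBsub p hp
        have hsum4 := hbLen (o + 1) ho1Cm
        have hsum5 : (∑ x ∈ unblkF hi k b (o + 1), ℓ x) ≤ ∑ x ∈ K, ℓ x :=
          Finset.sum_le_sum_of_subset fun x hx => hUsub x hx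
        have hgeo := geomAux j
        omega
    · -- case d < i
      rcases Finset.eq_empty_or_nonempty (unblkF hi k cf i) with hUe | hUne
      · have hPe : ubpF hi k cf i = ∅ := by
          rw [Finset.eq_empty_iff_forall_notMem]
          intro p hp
          rw [hmemP] at hp
          obtain ⟨_, x, _, hxU⟩ := hp
          rw [hUe] at hxU
          exact absurd hxU (Finset.notMem_empty x)
        rw [hUe, hPe]
        simp
      · have hyU : (unblkF hi k cf i).min' hUne ∈ unblkF hi k cf i :=
          Finset.min'_mem _ hUne
        set y := (unblkF hi k cf i).min' hUne with hy
        have hymin : ∀ x ∈ unblkF hi k cf i, y ≤ x := fun x hx => Finset.min'_le _ x hx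
        have hyU' := hyU
        rw [hmemU] at hyU'
        obtain ⟨hyhi, hyoccc, hiy, hyblk⟩ := hyU'
        have hyd : d < y := by omega
        obtain ⟨qy, hjqy, hqyk, hbqy⟩ := (hocc_cb y hyoccc (by omega)).2
        have hyoccb : occursIn k b y := ⟨qy, hqyk, hbqy⟩
        have hU1 : ∀ x ∈ unblkF hi k cf i, x ∈ unblkF hi k b y := by
          intro x hx
          have hyx := hymin x hx
          rw [hmemU] at hx
          obtain ⟨hxhi, hxoccc, hix, hxblk⟩ := hx
          obtain ⟨qx, hjqx, hqxk, hbqx⟩ := (hocc_cb x hxoccc (by omega)).2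
          rw [hmemU]
          refine ⟨hxhi, ⟨qx, hqxk, hbqx⟩, hyx, ?_⟩
          intro o'' ho'' h1 h2 hocc
          obtain ⟨r, hrk, hbr⟩ := hocc
          rcases Nat.lt_trichotomy r j with h | h | h
          · exact hbodd_pos o'' ho'' r hrk hbr h
          · subst h
            have hle : o'' ≤ y := hmono r qy hjqy hqyk o'' y hbr hbqy
            omega
          · have hoccc : occursIn k cf o'' := ⟨r, hrk, hcfkeep r h o'' hbr (by omega)⟩
            exact hxblk o'' ho'' (by omega) h2 hoccc
        have hU2 : ∀ x ∈ unblkF hi k b y, x ∈ unblkF hi k cf i := by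
          intro x hx
          rw [hmemU] at hx
          obtain ⟨hxhi, hxocc, hyx, hxblk⟩ := hx
          obtain ⟨r, hrk, hbr⟩ := hxocc
          have hoccc : occursIn k cf x := by
            rcases Nat.lt_trichotomy r j with h | h | h
            · have hxy : x ≤ y := hmono r qy (by omega) hqyk x y hbr hbqy
              have hxeq : x = y := by omega
              rw [hxeq]
              exact hyoccc
            · exfalso
              subst h
              obtain ⟨hodd_x, _⟩ := hbj_odd x hbr
              have hxy : x ≤ y := hmono r qy hjqy hqyk x y hbr hbqy
              have hxeq : x = y := by omega
              rw [← hxeq] at hbqy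
              exact hbCon x hodd_x r qy (by omega) hqyk (by omega) hbr hbqy
            · exact ⟨r, hrk, hcfkeep r h x hbr (by omega)⟩
          rw [hmemU]
          refine ⟨hxhi, hoccc, by omega, ?_⟩
          intro o'' ho'' h1 h2 hocc
          obtain ⟨q', hjq', hq'k, hbq'⟩ := hodd_occ_c o'' ho'' hocc
          rcases Nat.lt_or_ge y o'' with h | h
          · exact hxblk o'' ho'' h h2 ⟨q', hq'k, hbq'⟩
          · exact hyblk o'' ho'' h1 h hocc
        have hUeq : unblkF hi k cf i = unblkF hi k b y :=
          Finset.Subset.antisymm (fun x hx => hU1 x hx) (fun x hx => hU2 x hx)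
        have hPsub : ubpF hi k cf i ⊆ ubpF hi k b y := by
          intro p hp
          rw [hmemP] at hp
          obtain ⟨hpk, x, hcpx, hxU⟩ := hp
          have hxd : x ≠ d := by
            intro hh
            have hxU' := hxU
            rw [hmemU] at hxU'
            obtain ⟨_, _, hix, _⟩ := hxU'
            omega
          obtain ⟨hjp, hbp, _⟩ := hcf_occ p hpk x hcpx hxd
          rw [hmemP]
          exact ⟨hpk, x, hbp, hU1 x hxU⟩
        have hyCm : CminusMem lo hi y := hbC qy hqyk y hbqy
        have hRHS : ∑ x ∈ unblkF hi k cf i, ℓ' x = ∑ x ∈ unblkF hi k b y, ℓ x := by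
          rw [hUeq]
          refine Finset.sum_congr rfl ?_
          intro x hx
          rw [hmemU] at hx
          exact hl'ne x (by omega)
        rw [hRHS]
        calc ∑ p ∈ ubpF hi k cf i, (2:ℕ) ^ p
            ≤ ∑ p ∈ ubpF hi k b y, 2 ^ p := Finset.sum_le_sum_of_subset hPsub
          _ ≤ _ := hbLen y hyCm
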